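/- A vector α ∈ ℝ^n is an integral vertex of the set covering polyhedron Q(A) = {x : x ≥ 0, xA ≥ 1} of a clutter C if and only if α is the characteristic vector of a minimal vertex cover of C. -/

import Mathlib

open Finset

/-- A clutter on vertex set `Fin n`: a family of nonempty edges, none contained in another. -/
structure Clutter (n : ℕ) where
  edges : Finset (Finset (Fin n))
  nonempty_edges : ∀ e ∈ edges, e.Nonempty
  antichain : ∀ e ∈ edges, ∀ f ∈ edges, e ⊆ f → e = f

namespace Clutter

variable {n : ℕ}

/-- `C` is `d`-uniform: every edge has exactly `d` vertices. -/
def Uniform (C : Clutter n) (d : ℕ) : Prop := ∀ e ∈ C.edges, e.card = d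

/-- `S` is a vertex cover of `C`. -/
def IsCover (C : Clutter n) (S : Finset (Fin n)) : Prop := ∀ e ∈ C.edges, (e ∩ S).Nonempty

/-- `S` is a minimal vertex cover of `C`. -/
def IsMinCover (C : Clutter n) (S : Finset (Fin n)) : Prop :=
  C.IsCover S ∧ ∀ T ⊆ S, C.IsCover T → T = S

/-- The vertex covering number `α₀(C)`. -/
noncomputable def coverNumber (C : Clutter n) : ℕ :=
  sInf {k | ∃ S : Finset (Fin n), C.IsCover S ∧ S.card = k}

/-- The edge independence (matching) number `β₁(C)`. -/
noncomputable def matchNumber (C : Clutter n) : ℕ :=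
  sSup {k | ∃ M : Finset (Finset (Fin n)), M ⊆ C.edges ∧
    (∀ e ∈ M, ∀ f ∈ M, e ≠ f → Disjoint e f) ∧ M.card = k}

/-- `C` has a perfect matching: pairwise disjoint edges covering all vertices. -/
def HasPerfectMatching (C : Clutter n) : Prop :=
  ∃ M : Finset (Finset (Fin n)), M ⊆ C.edges ∧
    (∀ e ∈ M, ∀ f ∈ M, e ≠ f → Disjoint e f) ∧ (∀ i : Fin n, ∃ e ∈ M, i ∈ e)

/-- The set covering polyhedron `Q(A) = {x : x ≥ 0, xA ≥ 1}`. -/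
def QA (C : Clutter n) : Set (Fin n → ℝ) :=
  {x | (∀ i, 0 ≤ x i) ∧ ∀ e ∈ C.edges, 1 ≤ ∑ i ∈ e, x i}

/-- `Q(A)` is an integral polyhedron: all its vertices (extreme points) are integral. -/
def QAIntegral (C : Clutter n) : Prop :=
  ∀ x ∈ Set.extremePoints ℝ C.QA, ∀ i, ∃ z : ℤ, x i = (z : ℝ)

/-- Deletion of a vertex: remove `v` and all edges through it. -/
def delete (C : Clutter n) (v : Fin n) : Clutter n where
  edges := C.edges.filter (fun e => v ∉ e)
  nonempty_edges := fun e he => C.nonempty_edges e (mem_filter.mp he).1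
  antichain := fun e he f hf hef =>
    C.antichain e (mem_filter.mp he).1 f (mem_filter.mp hf).1 hef

/-- The edges of the minor of `C` obtained by deleting the vertices in `D`
(setting them to `0`) and contracting the vertices in `U` (setting them to `1`):
the minimal nonempty sets of the form `e \ U` with `e` an edge disjoint from `D`. -/
def minorEdges (C : Clutter n) (D U : Finset (Fin n)) : Finset (Finset (Fin n)) :=
  ((C.edges.filter (fun e => Disjoint e D)).image (fun e => e \ U)).filter
    (fun e => e.Nonempty ∧
      ∀ f ∈ (C.edges.filter (fun e => Disjoint e D)).image (fun e => e \ U),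
        f.Nonempty → f ⊆ e → f = e)

/-- The minor of `C` determined by deleting `D` and contracting `U`. -/
def minor (C : Clutter n) (D U : Finset (Fin n)) : Clutter n where
  edges := C.minorEdges D U
  nonempty_edges := fun e he => ((mem_filter.mp he).2).1
  antichain := fun e he f hf hef =>
    ((mem_filter.mp hf).2).2 e (mem_filter.mp he).1 ((mem_filter.mp he).2).1 hef

/-- The König property: `α₀(C) = β₁(C)`. -/
def HasKonig (C : Clutter n) : Prop := C.coverNumber = C.matchNumber

/-- The packing property: every (proper) minor of `C` has the König property. -/
def PackingProperty (C : Clutter n) : Prop :=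
  ∀ D U : Finset (Fin n), Disjoint D U →
    (∀ e ∈ C.edges, Disjoint e D → ¬ e ⊆ U) → (C.minor D U).HasKonig

/-- The max-flow min-cut property: for every nonnegative integral `α` the LP
`min{⟨α,x⟩ : x ≥ 0, xA ≥ 1}` and its dual `max{⟨y,1⟩ : y ≥ 0, Ay ≤ α}` both have
integral optimum solutions (expressed via a pair of integral feasible solutions
with equal objective values, which are then optimal by LP duality). -/
def HasMFMC (C : Clutter n) : Prop :=
  ∀ α : Fin n → ℕ,
    ∃ (x : Fin n → ℕ) (y : Finset (Fin n) → ℕ),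
      (∀ e ∈ C.edges, 1 ≤ ∑ i ∈ e, x i) ∧
      (∀ e, e ∉ C.edges → y e = 0) ∧
      (∀ i : Fin n, ∑ e ∈ C.edges.filter (fun e => i ∈ e), y e ≤ α i) ∧
      (∑ i, α i * x i = ∑ e ∈ C.edges, y e)

/-- The incidence matrix of `C`, with columns indexed by the edges. -/
def inc (C : Clutter n) : Matrix (Fin n) {e // e ∈ C.edges} ℤ :=
  Matrix.of fun i e => if i ∈ e.1 then 1 else 0

end Clutter

/-- `Δ_r(A) = 1`: the gcd of all nonzero `r × r` subdeterminants of `A` is `1`,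
i.e. every common divisor of them is a unit. -/
def DeltaOne {m m' : Type*} [Fintype m] [Fintype m'] (A : Matrix m m' ℤ) (r : ℕ) : Prop :=
  ∀ k : ℤ, (∀ (f : Fin r → m) (g : Fin r → m'), Function.Injective f → Function.Injective g →
    (A.submatrix f g).det ≠ 0 → k ∣ (A.submatrix f g).det) → IsUnit k


lemma sum_update_of_mem' {n : ℕ} {e : Finset (Fin n)} {i : Fin n} (hi : i ∈ e)
    (α : Fin n → ℝ) (v : ℝ) :
    ∑ j ∈ e, Function.update α i v j = ∑ j ∈ e, α j - α i + v := by
  rw [Finset.sum_update_of_mem hi, Finset.sdiff_singleton_eq_erase]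
  have := Finset.sum_erase_add e α hi
  linarith

lemma not_extreme_of_slack {n : ℕ} (C : Clutter n) (α : Fin n → ℝ) (i : Fin n)
    (hpos : 0 < α i) (hslack : ∀ e ∈ C.edges, i ∈ e → 1 < ∑ j ∈ e, α j)
    (hmem : α ∈ Set.extremePoints ℝ C.QA) : False := by
  obtain ⟨hQ, hext⟩ := hmem
  set F : Finset ℝ := (C.edges.filter (fun e => i ∈ e)).image (fun e => ∑ j ∈ e, α j - 1)
    with hF
  set s : Finset ℝ := insert (α i) F with hs
  have hsne : s.Nonempty := Finset.insert_nonempty _ _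
  set ε : ℝ := s.min' hsne with hε
  have hεpos : 0 < ε := by
    have hmem' : ε ∈ s := s.min'_mem hsne
    rw [hs] at hmem'
    rcases Finset.mem_insert.mp hmem' with h | h
    · rw [h]; exact hpos
    · rw [hF] at h
      obtain ⟨e, he, heq⟩ := Finset.mem_image.mp h
      have := hslack e (Finset.mem_filter.mp he).1 (Finset.mem_filter.mp he).2
      linarith
  have hεle : ε ≤ α i := Finset.min'_le _ _ (Finset.mem_insert_self _ _)
  have hεle2 : ∀ e ∈ C.edges, i ∈ e → ε ≤ ∑ j ∈ e, α j - 1 := by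
    intro e he hie
    exact Finset.min'_le _ _ (Finset.mem_insert_of_mem
      (Finset.mem_image_of_mem _ (Finset.mem_filter.mpr ⟨he, hie⟩)))
  set x₁ : Fin n → ℝ := Function.update α i (α i - ε) with hx₁
  set x₂ : Fin n → ℝ := Function.update α i (α i + ε) with hx₂
  have hsum_eq : ∀ (v : ℝ) (e : Finset (Fin n)), i ∉ e →
      ∑ j ∈ e, Function.update α i v j = ∑ j ∈ e, α j := by
    intro v e hie
    exact Finset.sum_congr rfl (fun j hj => Function.update_of_ne (by rintro rfl; exact hie hj) _ _)
  have hq1 : x₁ ∈ C.QA := by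
    constructor
    · intro j
      by_cases h : j = i
      · subst h; rw [hx₁, Function.update_self]; linarith
      · rw [hx₁, Function.update_of_ne h]; exact hQ.1 j
    · intro e he
      by_cases hie : i ∈ e
      · rw [hx₁, sum_update_of_mem' hie]
        have := hεle2 e he hie
        linarith
      · rw [hx₁, hsum_eq _ e hie]; exact hQ.2 e he
  have hq2 : x₂ ∈ C.QA := by
    constructor
    · intro j
      by_cases h : j = i
      · subst h; rw [hx₂, Function.update_self]; linarith
      · rw [hx₂, Function.update_of_ne h]; exact hQ.1 j
    · intro e he
      by_cases hie : i ∈ e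
      · rw [hx₂, sum_update_of_mem' hie]
        have := hQ.2 e he
        linarith
      · rw [hx₂, hsum_eq _ e hie]; exact hQ.2 e he
  have hseg : α ∈ openSegment ℝ x₁ x₂ := by
    refine ⟨1/2, 1/2, by norm_num, by norm_num, by norm_num, ?_⟩
    funext j
    by_cases h : j = i
    · subst h
      simp only [Pi.add_apply, Pi.smul_apply, smul_eq_mul, hx₁, hx₂, Function.update_self]
      ring
    · simp only [Pi.add_apply, Pi.smul_apply, smul_eq_mul, hx₁, hx₂,
        Function.update_of_ne h]
      ring
  have := hext hq1 hq2 hseg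
  have : x₁ i = α i := by rw [this]
  rw [hx₁, Function.update_self] at this
  linarith

/-- A vector `α ∈ ℝⁿ` is an integral vertex of the set covering
polyhedron `Q(A)` of a clutter `C` if and only if `α` is the characteristic vector of a
minimal vertex cover of `C`. -/
theorem stmt19 {n : ℕ} (C : Clutter n) (α : Fin n → ℝ) :
    (α ∈ Set.extremePoints ℝ C.QA ∧ ∀ i, ∃ z : ℤ, α i = (z : ℝ)) ↔
    ∃ S : Finset (Fin n), C.IsMinCover S ∧ α = fun i => if i ∈ S then 1 else 0 := by
  constructor
  · rintro ⟨hext, hint⟩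
    have hQ : α ∈ C.QA := hext.1
    -- each coordinate is 0 or 1
    have h01 : ∀ i, α i = 0 ∨ α i = 1 := by
      intro i
      have hle1 : α i ≤ 1 := by
        by_contra h
        push_neg at h
        refine not_extreme_of_slack C α i (by linarith) ?_ hext
        intro e he hie
        have hsub : {i} ⊆ e := Finset.singleton_subset_iff.mpr hie
        have : ∑ j ∈ ({i} : Finset (Fin n)), α j ≤ ∑ j ∈ e, α j :=
          Finset.sum_le_sum_of_subset_of_nonneg hsub (fun j _ _ => hQ.1 j)
        simp only [Finset.sum_singleton] at this
        linarith
      obtain ⟨z, hz⟩ := hint i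
      have h0 : (0:ℝ) ≤ (z:ℝ) := hz ▸ hQ.1 i
      have h1 : (z:ℝ) ≤ 1 := hz ▸ hle1
      have hz0 : (0:ℤ) ≤ z := by exact_mod_cast h0
      have hz1 : z ≤ 1 := by exact_mod_cast h1
      interval_cases z
      · left; simpa using hz
      · right; simpa using hz
    set S : Finset (Fin n) := Finset.univ.filter (fun i => α i = 1) with hS
    have hmemS : ∀ i, i ∈ S ↔ α i = 1 := by
      intro i; simp [hS]
    have hαS : α = fun i => if i ∈ S then 1 else 0 := by
      funext i
      by_cases h : i ∈ S
      · simp [h, (hmemS i).mp h]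
      · rcases h01 i with h0 | h1
        · simp [h, h0]
        · exact absurd ((hmemS i).mpr h1) h
    have hsum : ∀ e : Finset (Fin n), ∑ j ∈ e, α j = ((e ∩ S).card : ℝ) := by
      intro e
      rw [hαS]
      rw [Finset.sum_ite_mem]
      simp
    refine ⟨S, ⟨?_, ?_⟩, hαS⟩
    · intro e he
      have := hQ.2 e he
      rw [hsum e] at this
      rw [← Finset.card_pos]
      exact_mod_cast (by linarith : (0:ℝ) < ((e ∩ S).card : ℝ))
    · intro T hT hTcov
      by_contra hne
      obtain ⟨i, hiS, hiT⟩ := Finset.exists_of_ssubset (lt_of_le_of_ne hT hne)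
      refine not_extreme_of_slack C α i ?_ ?_ hext
      · rw [(hmemS i).mp hiS]; norm_num
      · intro e he hie
        obtain ⟨j, hj⟩ := hTcov e he
        have hjT : j ∈ T := (Finset.mem_inter.mp hj).2
        have hje : j ∈ e := (Finset.mem_inter.mp hj).1
        have hji : j ≠ i := fun h => hiT (h ▸ hjT)
        have hjS : α j = 1 := (hmemS j).mp (hT hjT)
        have hsub : ({i, j} : Finset (Fin n)) ⊆ e := by
          intro k hk
          rcases Finset.mem_insert.mp hk with h | h
          · exact h ▸ hie
          · exact (Finset.mem_singleton.mp h) ▸ hje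
        have hle : ∑ k ∈ ({i, j} : Finset (Fin n)), α k ≤ ∑ k ∈ e, α k :=
          Finset.sum_le_sum_of_subset_of_nonneg hsub (fun k _ _ => hQ.1 k)
        rw [Finset.sum_insert (by simp [hji.symm]), Finset.sum_singleton] at hle
        rw [(hmemS i).mp hiS, hjS] at hle
        linarith
  · rintro ⟨S, ⟨hcov, hmin⟩, hαS⟩
    have hQ : α ∈ C.QA := by
      constructor
      · intro i; rw [hαS]; dsimp only; split <;> norm_num
      · intro e he
        rw [hαS]
        simp only
        rw [Finset.sum_ite_mem]
        have := Finset.card_pos.mpr (hcov e he)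
        have : (1:ℝ) ≤ ((e ∩ S).card : ℝ) := by exact_mod_cast this
        simpa using this
    refine ⟨⟨hQ, ?_⟩, ?_⟩
    · rintro x₁ hx₁ x₂ hx₂ ⟨a, b, ha, hb, hab, habα⟩
      -- coordinates off S are zero
      have hzero : ∀ i, i ∉ S → x₁ i = 0 ∧ x₂ i = 0 := by
        intro i hiS
        have hα0 : α i = 0 := by rw [hαS]; simp [hiS]
        have h := congrFun habα i
        simp only [Pi.add_apply, Pi.smul_apply, smul_eq_mul] at h
        rw [hα0] at h
        have h1 := hx₁.1 i
        have h2 := hx₂.1 i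
        constructor <;> nlinarith [mul_nonneg ha.le h1, mul_nonneg hb.le h2]
      have hone : ∀ i, i ∈ S → x₁ i = 1 ∧ x₂ i = 1 := by
        intro i hiS
        -- there's an edge meeting S only in i
        have hnotcov : ¬ C.IsCover (S.erase i) := by
          intro h
          have heq := hmin (S.erase i) (Finset.erase_subset _ _) h
          rw [← heq] at hiS
          exact Finset.notMem_erase i S hiS
        rw [Clutter.IsCover] at hnotcov
        push_neg at hnotcov
        obtain ⟨e, he, hee⟩ := hnotcov
        obtain ⟨j, hj⟩ := hcov e he
        have hje : j ∈ e := (Finset.mem_inter.mp hj).1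
        have hjS : j ∈ S := (Finset.mem_inter.mp hj).2
        have hji : j = i := by
          by_contra h
          have : j ∈ e ∩ S.erase i := Finset.mem_inter.mpr ⟨hje, Finset.mem_erase.mpr ⟨h, hjS⟩⟩
          rw [hee] at this
          exact absurd this (Finset.notMem_empty j)
        subst hji
        -- sum over e of x₁ equals x₁ j
        have honly : ∀ k ∈ e, k ≠ j → k ∉ S := by
          intro k hk hkj hkS
          have : k ∈ e ∩ S.erase j := Finset.mem_inter.mpr ⟨hk, Finset.mem_erase.mpr ⟨hkj, hkS⟩⟩
          rw [hee] at this
          exact absurd this (Finset.notMem_empty k)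
        have hsum1 : ∀ x : Fin n → ℝ, x ∈ C.QA → (∀ k, k ∉ S → x k = 0) → 1 ≤ x j := by
          intro x hx hx0
          have := hx.2 e he
          have heq : ∑ k ∈ e, x k = x j := by
            rw [← Finset.add_sum_erase e x hje]
            have : ∑ k ∈ e.erase j, x k = 0 := by
              apply Finset.sum_eq_zero
              intro k hk
              exact hx0 k (honly k (Finset.mem_erase.mp hk).2 (Finset.mem_erase.mp hk).1)
            rw [this, add_zero]
          rw [heq] at this
          exact this
        have h1 : 1 ≤ x₁ j := hsum1 x₁ hx₁ (fun k hk => (hzero k hk).1)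
        have h2 : 1 ≤ x₂ j := hsum1 x₂ hx₂ (fun k hk => (hzero k hk).2)
        have hαj : α j = 1 := by rw [hαS]; simp [hjS]
        have h := congrFun habα j
        simp only [Pi.add_apply, Pi.smul_apply, smul_eq_mul] at h
        rw [hαj] at h
        constructor <;> nlinarith
      have heq : ∀ x : Fin n → ℝ, (∀ i ∈ S, x i = 1) → (∀ i, i ∉ S → x i = 0) → x = α := by
        intro x h1 h0
        funext i
        rw [hαS]
        by_cases h : i ∈ S
        · simp [h, h1 i h]
        · simp [h, h0 i h]
      exact heq x₁ (fun i hi => (hone i hi).1) (fun i hi => (hzero i hi).1)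
    · intro i
      rw [hαS]
      by_cases h : i ∈ S
      · exact ⟨1, by simp [h]⟩
      · exact ⟨0, by simp [h]⟩
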